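/- arXiv:1706.04392 — 3 statements merged into one kernel-verified Lean document; each statement's English description precedes it below -/
import Mathlib

section
/- Over a finite field F_q of characteristic 2, there is no dynamically irreducible quadratic polynomial; i.e., for every quadratic f ∈ F_q[X] there exists n ≥ 1 such that f^(n) is reducible over F_q. -/
open Polynomial

section Aux

lemma quad_decomp {F : Type*} [Field F] (f : F[X]) (hf : f.natDegree = 2) :
    f = C (f.coeff 2) * X ^ 2 + C (f.coeff 1) * X + C (f.coeff 0) := by
  ext n
  simp only [coeff_add, coeff_C_mul, coeff_X_pow, coeff_C, coeff_X]
  match n with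
  | 0 => simp
  | 1 => simp
  | 2 => simp
  | (n+3) =>
    have : f.coeff (n+3) = 0 := coeff_eq_zero_of_natDegree_lt (by omega)
    simp [this]

/-- If the "relative trace" vanishes, the absolute-trace-like sum vanishes. -/
lemma trace_sum_zero {K : Type*} [Field K] [CharP K 2] (k : ℕ) (u : K)
    (hS : u + u ^ 2 ^ k + u ^ 2 ^ (2 * k) + u ^ 2 ^ (3 * k) = 0) :
    ∑ i ∈ Finset.range (4 * k), u ^ 2 ^ i = 0 := by
  have h4 : 4 * k = k + (k + (k + k)) := by ring
  rw [h4, Finset.sum_range_add, Finset.sum_range_add, Finset.sum_range_add,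
    ← Finset.sum_add_distrib, ← Finset.sum_add_distrib, ← Finset.sum_add_distrib]
  have key : ∀ i ∈ Finset.range k,
      u ^ 2 ^ i + (u ^ 2 ^ (k + i) + (u ^ 2 ^ (k + (k + i)) + u ^ 2 ^ (k + (k + (k + i))))) = 0 := by
    intro i _
    have e1 : ∀ j : ℕ, u ^ 2 ^ (j + i) = (u ^ 2 ^ j) ^ 2 ^ i := by
      intro j; rw [pow_add, pow_mul]
    have e2 : u ^ 2 ^ (k + (k + i)) = (u ^ 2 ^ (2 * k)) ^ 2 ^ i := by
      rw [show k + (k + i) = 2 * k + i by ring, e1]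
    have e3 : u ^ 2 ^ (k + (k + (k + i))) = (u ^ 2 ^ (3 * k)) ^ 2 ^ i := by
      rw [show k + (k + (k + i)) = 3 * k + i by ring, e1]
    have e0 : u ^ 2 ^ i = (u : K) ^ 2 ^ i := rfl
    rw [e1 k, e2, e3, e0, ← add_pow_char_pow (R := K), ← add_pow_char_pow (R := K),
      ← add_pow_char_pow (R := K)]
    rw [show u + (u ^ 2 ^ k + (u ^ 2 ^ (2 * k) + u ^ 2 ^ (3 * k)))
        = u + u ^ 2 ^ k + u ^ 2 ^ (2 * k) + u ^ 2 ^ (3 * k) by ring, hS]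
    exact zero_pow (by positivity)
  rw [Finset.sum_congr rfl key, Finset.sum_const_zero]

/-- Additive Hilbert 90 / Artin–Schreier solvability in a finite field of
characteristic two. -/
lemma artin_schreier_solvable {K : Type*} [Field K] [Fintype K] [CharP K 2] {m : ℕ}
    (hm : 1 ≤ m) (hcard : Fintype.card K = 2 ^ m) (u : K)
    (hT : ∑ i ∈ Finset.range m, u ^ 2 ^ i = 0) :
    ∃ z : K, z ^ 2 + z = u := by
  classical
  set T : K → K := fun x => ∑ i ∈ Finset.range m, x ^ 2 ^ i with hTdef
  set φ : K → K := fun y => y ^ 2 + y with hφ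
  -- T (y^2) = T y
  have hTsq : ∀ y : K, T (y ^ 2) = T y := by
    intro y
    have h1 : ∀ i : ℕ, (y ^ 2) ^ 2 ^ i = y ^ 2 ^ (i + 1) := by
      intro i; rw [← pow_mul, ← pow_succ']
    have h2 : ∑ i ∈ Finset.range (m + 1), y ^ 2 ^ i
        = (∑ i ∈ Finset.range m, y ^ 2 ^ (i + 1)) + y ^ 2 ^ 0 :=
      Finset.sum_range_succ' _ _
    have h3 : ∑ i ∈ Finset.range (m + 1), y ^ 2 ^ i
        = (∑ i ∈ Finset.range m, y ^ 2 ^ i) + y ^ 2 ^ m := Finset.sum_range_succ _ _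
    have h4 : y ^ 2 ^ m = y := by rw [← hcard]; exact FiniteField.pow_card y
    have h5 : (y ^ 2 ^ 0 : K) = y := by norm_num
    have := h2.symm.trans h3
    rw [h4, h5] at this
    have := add_right_cancel this
    simp only [hTdef]
    rw [Finset.sum_congr rfl fun i _ => h1 i, this]
  -- T kills the image of φ
  have hTφ : ∀ y : K, T (φ y) = 0 := by
    intro y
    have hadd : T (y ^ 2 + y) = T (y ^ 2) + T y := by
      simp only [hTdef]
      rw [← Finset.sum_add_distrib]
      exact Finset.sum_congr rfl fun i _ => add_pow_char_pow ..
    rw [hφ]; simp only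
    rw [hadd, hTsq, CharTwo.add_self_eq_zero]
  -- the sets
  set A : Finset K := Finset.univ.filter fun x => T x = 0 with hA
  have himg : Finset.univ.image φ ⊆ A := by
    intro x hx
    simp only [Finset.mem_image, Finset.mem_univ, true_and] at hx
    obtain ⟨y, rfl⟩ := hx
    simp only [hA, Finset.mem_filter, Finset.mem_univ, true_and]
    exact hTφ y
  -- fibers of φ have at most two elements
  have hcard_univ : (Finset.univ : Finset K).card ≤ 2 * (Finset.univ.image φ).card := by
    apply Finset.card_le_mul_card_image
    intro b _
    by_cases hne : (Finset.univ.filter fun y => φ y = b).Nonempty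
    · obtain ⟨y0, hy0⟩ := hne
      simp only [Finset.mem_filter, Finset.mem_univ, true_and] at hy0
      have : (Finset.univ.filter fun y => φ y = b) ⊆ {y0, y0 + 1} := by
        intro y hy
        simp only [Finset.mem_filter, Finset.mem_univ, true_and] at hy
        have h0 : φ y + φ y0 = 0 := by rw [hy, hy0, CharTwo.add_self_eq_zero]
        have h1 : (y + y0) ^ 2 + (y + y0) = 0 := by
          have : (y + y0) ^ 2 = y ^ 2 + y0 ^ 2 := CharTwo.add_sq y y0
          rw [this]
          calc y ^ 2 + y0 ^ 2 + (y + y0) = (y ^ 2 + y) + (y0 ^ 2 + y0) := by ring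
          _ = 0 := h0
        have htwo : (2 : K) = 0 := CharTwo.two_eq_zero
        have h2 : (y + y0) * ((y + y0) + 1) = 0 := by linear_combination h1
        rcases mul_eq_zero.mp h2 with h | h
        · have : y = y0 := by linear_combination h - y0 * htwo
          simp [this]
        · have : y = y0 + 1 := by linear_combination h - (y0 + 1) * htwo
          simp [this]
      calc (Finset.univ.filter fun y => φ y = b).card ≤ ({y0, y0 + 1} : Finset K).card :=
            Finset.card_le_card this
      _ ≤ 2 := Finset.card_insert_le _ _ |>.trans (by simp)
    · rw [Finset.not_nonempty_iff_eq_empty.mp hne]; simp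
  -- A is small: its elements are roots of a polynomial of degree 2^(m-1)
  have hP : ∀ x ∈ A, (∑ i ∈ Finset.range m, (X : K[X]) ^ 2 ^ i).eval x = 0 := by
    intro x hx
    simp only [hA, Finset.mem_filter, Finset.mem_univ, true_and] at hx
    simpa [eval_finset_sum] using hx
  have hPdeg : (∑ i ∈ Finset.range m, (X : K[X]) ^ 2 ^ i).natDegree ≤ 2 ^ (m - 1) := by
    apply Polynomial.natDegree_sum_le_of_forall_le
    intro i hi
    simp only [Finset.mem_range] at hi
    rw [natDegree_X_pow]
    exact Nat.pow_le_pow_right (by norm_num) (by omega)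
  have hPne : (∑ i ∈ Finset.range m, (X : K[X]) ^ 2 ^ i) ≠ 0 := by
    intro h
    have : (∑ i ∈ Finset.range m, (X : K[X]) ^ 2 ^ i).coeff (2 ^ (m - 1)) = 1 := by
      rw [finset_sum_coeff]
      rw [Finset.sum_eq_single (m - 1)]
      · simp [coeff_X_pow]
      · intro i hi hne
        simp only [Finset.mem_range] at hi
        rw [coeff_X_pow, if_neg]
        intro hc
        exact hne (Nat.pow_right_injective (le_refl 2) hc.symm)
      · intro h'
        exact absurd (Finset.mem_range.mpr (by omega)) h'
    rw [h] at this
    simp at this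
  have hAcard : A.card ≤ 2 ^ (m - 1) := by
    by_contra hlt
    push_neg at hlt
    exact hPne (Polynomial.eq_zero_of_natDegree_lt_card_of_eval_eq_zero' _ A hP
      (lt_of_le_of_lt hPdeg hlt))
  -- combine
  have h2m : (2 : ℕ) * 2 ^ (m - 1) = 2 ^ m := by
    rw [← pow_succ']
    congr 1
    omega
  have hcards : (Finset.univ.image φ).card = A.card := by
    have h1 : (Finset.univ.image φ).card ≤ A.card := Finset.card_le_card himg
    have h2 : 2 ^ m ≤ 2 * (Finset.univ.image φ).card := by
      calc (2:ℕ) ^ m = Fintype.card K := hcard.symm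
      _ = (Finset.univ : Finset K).card := (Finset.card_univ).symm
      _ ≤ 2 * (Finset.univ.image φ).card := hcard_univ
    omega
  have hAeq : Finset.univ.image φ = A :=
    Finset.eq_of_subset_of_card_le himg (le_of_eq hcards.symm)
  have hu : u ∈ A := by
    simp only [hA, Finset.mem_filter, Finset.mem_univ, true_and]
    exact hT
  rw [← hAeq] at hu
  simp only [Finset.mem_image, Finset.mem_univ, true_and] at hu
  obtain ⟨z, hz⟩ := hu
  exact ⟨z, hz⟩

end Aux

/-- Over a finite field of characteristic 2 there is no dynamically irreducible
quadratic polynomial. -/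
theorem stmt_2 (F : Type*) [Field F] [Fintype F] [CharP F 2]
    (f : F[X]) (hf : f.natDegree = 2) :
    ∃ n : ℕ, 1 ≤ n ∧ ¬ Irreducible ((fun p => f.comp p)^[n] X) := by
  by_cases h1 : Irreducible f
  swap
  · exact ⟨1, le_refl 1, by simpa using h1⟩
  by_cases h2 : Irreducible (f.comp f)
  swap
  · refine ⟨2, by norm_num, ?_⟩
    show ¬ Irreducible (f.comp (f.comp X))
    simpa using h2
  refine ⟨3, by norm_num, ?_⟩
  show ¬ Irreducible (f.comp (f.comp (f.comp X)))
  rw [comp_X, ← comp_assoc]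
  intro h3
  -- notation
  set a := f.coeff 2 with ha_def
  set b := f.coeff 1 with hb_def
  set c := f.coeff 0 with hc_def
  have hfd : f = C a * X ^ 2 + C b * X + C c := quad_decomp f hf
  have hfne : f ≠ 0 := fun h => by simp [h] at hf
  have ha : a ≠ 0 := by
    have : a = f.leadingCoeff := by rw [leadingCoeff, hf]
    rw [this]
    exact leadingCoeff_ne_zero.mpr hfne
  -- b ≠ 0, else f is a square
  have hb : b ≠ 0 := by
    intro hb0
    obtain ⟨s, hs⟩ := surjective_frobenius F 2 a
    obtain ⟨t, ht⟩ := surjective_frobenius F 2 c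
    have hs' : s ^ 2 = a := hs
    have ht' : t ^ 2 = c := ht
    have hsne : s ≠ 0 := fun h => ha (by rw [← hs', h]; ring)
    have hf2 : f = (C s * X + C t) * (C s * X + C t) := by
      rw [hfd, hb0]
      have hsq : (C s * X + C t) * (C s * X + C t) = (C s * X) ^ 2 + (C t) ^ 2 := by
        rw [← sq, CharTwo.add_sq]
      rw [hsq, mul_pow, ← C_pow, ← C_pow, hs', ht']
      simp
    have := h1.isUnit_or_isUnit hf2
    have hunit : IsUnit (C s * X + C t) := by tauto
    exact not_isUnit_of_natDegree_pos _ (by rw [natDegree_linear hsne]; norm_num) hunit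
  -- the quadratic field extension setup
  have hgne : f.comp f ≠ 0 := h2.ne_zero
  have hg4 : (f.comp f).natDegree = 4 := by rw [natDegree_comp, hf]
  have hgc3 : (f.comp f).coeff 3 = 0 := by
    have hcomp : f.comp f = C a * f ^ 2 + C b * f + C c := by
      conv_lhs => rw [hfd]
      simp only [add_comp, mul_comp, pow_comp, C_comp, X_comp]
      rw [← hfd]
    have hfsq : f ^ 2 = C (a ^ 2) * X ^ 4 + C (b ^ 2) * X ^ 2 + C (c ^ 2) := by
      conv_lhs => rw [hfd]
      rw [CharTwo.add_sq, CharTwo.add_sq, mul_pow, mul_pow, ← C_pow, ← C_pow, ← C_pow,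
        ← pow_mul]
    have h3f : f.coeff 3 = 0 := coeff_eq_zero_of_natDegree_lt (by omega)
    rw [hcomp, hfsq]
    simp only [mul_add, coeff_add, ← mul_assoc, ← C_mul, coeff_C_mul, coeff_X_pow, coeff_C,
      h3f]
    norm_num
  -- the quartic field extension
  haveI hfact : Fact (Irreducible (f.comp f)) := ⟨h2⟩
  set K := AdjoinRoot (f.comp f) with hKdef
  set ι : F →+* K := algebraMap F K with hιdef
  let pb := AdjoinRoot.powerBasis hgne
  haveI hMF : Module.Finite F K := Module.Finite.of_basis pb.basis
  have hrank : Module.finrank F K = 4 := by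
    rw [pb.finrank, AdjoinRoot.powerBasis_dim, hg4]
  haveI : Finite K := Module.finite_of_finite F
  haveI : Fintype K := Fintype.ofFinite K
  haveI : CharP K 2 := charP_of_injective_algebraMap (algebraMap F K).injective 2
  obtain ⟨kp, -, hkcard⟩ := FiniteField.card F 2
  set k : ℕ := (kp : ℕ) with hkdef
  have hk1 : 1 ≤ k := kp.one_le
  have hcardF : Fintype.card F = 2 ^ k := hkcard
  have hcardK : Fintype.card K = 2 ^ (4 * k) := by
    rw [Module.card_eq_pow_finrank (K := F) (V := K), hcardF, hrank, ← pow_mul]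
    ring_nf
  set β : K := AdjoinRoot.root (f.comp f) with hβdef
  have hβroot : aeval β (f.comp f) = 0 := by
    rw [AdjoinRoot.aeval_eq, AdjoinRoot.mk_self]
  -- a Frobenius power fixing the coefficient field moves everything along with β
  have haev : ∀ (n : ℕ) (p : F[X]), (aeval β p) ^ 2 ^ (k * n) = aeval (β ^ 2 ^ (k * n)) p := by
    intro n p
    have hψι : ∀ w : F, (iterateFrobenius K 2 (k * n)) (ι w) = ι w := by
      intro w
      rw [iterateFrobenius_def, ← map_pow]
      congr 1
      rw [pow_mul, ← hcardF]
      exact FiniteField.pow_card_pow n w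
    have := hom_eval₂ p (algebraMap F K) (iterateFrobenius K 2 (k * n)) β
    rw [(RingHom.ext hψι : (iterateFrobenius K 2 (k * n)).comp (algebraMap F K) = algebraMap F K)]
      at this
    rw [← aeval_def] at this
    calc (aeval β p) ^ 2 ^ (k * n) = (iterateFrobenius K 2 (k * n)) (aeval β p) := rfl
    _ = aeval (β ^ 2 ^ (k * n)) p := by
        rw [this, iterateFrobenius_def, ← aeval_def]
  have hfix : ∀ d, 0 < d → d < 4 → β ^ 2 ^ (k * d) ≠ β := by
    intro d hd hd4 heq
    have hall : ∀ x : K, x ^ 2 ^ (k * d) = x := by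
      intro x
      obtain ⟨p, rfl⟩ := AdjoinRoot.mk_surjective x
      rw [← AdjoinRoot.aeval_eq, haev d p, heq]
    have hkd1 : 1 ≤ k * d := Nat.one_le_iff_ne_zero.mpr (by positivity)
    have hne0 : ((X : K[X]) ^ 2 ^ (k * d) - X) ≠ 0 := by
      intro h
      have hc := congrArg (fun p => Polynomial.coeff p (2 ^ (k * d))) h
      have h2kd : (2 : ℕ) ^ (k * d) ≠ 1 := by
        have : (2:ℕ) ^ 1 ≤ 2 ^ (k * d) := Nat.pow_le_pow_right (by norm_num) hkd1
        omega
      simp [coeff_X_pow, coeff_X, h2kd, Ne.symm h2kd] at hc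
    apply hne0
    apply Polynomial.eq_zero_of_natDegree_lt_card_of_eval_eq_zero _
      (f := (id : K → K)) Function.injective_id
    · intro x
      simp [eval_pow, hall x]
    · calc ((X : K[X]) ^ 2 ^ (k * d) - X).natDegree ≤ 2 ^ (k * d) := by
            refine (Polynomial.natDegree_sub_le _ _).trans ?_
            simp only [natDegree_X_pow, natDegree_X]
            have : (1:ℕ) ≤ 2 ^ (k * d) := Nat.one_le_two_pow
            omega
      _ < 2 ^ (4 * k) := by
            apply Nat.pow_lt_pow_right (by norm_num)
            calc k * d ≤ k * 3 := Nat.mul_le_mul_left k (by omega)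
            _ < 4 * k := by omega
      _ = Fintype.card K := hcardK.symm
  -- the conjugates of β and their sum
  set r : ℕ → K := fun j => β ^ 2 ^ (k * j) with hrdef
  have hroots : ∀ j, aeval (r j) (f.comp f) = 0 := by
    intro j
    rw [hrdef]
    simp only
    rw [← haev j (f.comp f), hβroot]
    exact zero_pow (by positivity)
  have hdist : ∀ i j, i < j → j < 4 → r i ≠ r j := by
    intro i j hij hj4 heq
    have hinj : Function.Injective (iterateFrobenius K 2 (k * i)) :=
      (bijective_iterateFrobenius K 2 (k * i)).1
    apply hfix (j - i) (by omega) (by omega)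
    apply hinj
    show (β ^ 2 ^ (k * (j - i))) ^ 2 ^ (k * i) = β ^ 2 ^ (k * i)
    rw [← pow_mul, ← pow_add, ← Nat.mul_add, Nat.sub_add_cancel (le_of_lt hij)]
    exact heq.symm
  have hιinj : Function.Injective ι := (algebraMap F K).injective
  set G : K[X] := (f.comp f).map ι with hGdef
  have hGne : G ≠ 0 := Polynomial.map_ne_zero hgne
  have hGdeg : G.natDegree = 4 := by
    rw [hGdef, natDegree_map_eq_of_injective hιinj, hg4]
  set P4 : K[X] := ∏ j ∈ Finset.range 4, (X - C (r j)) with hP4def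
  have hP4monic : P4.Monic := monic_prod_of_monic _ _ fun _ _ => monic_X_sub_C _
  have hP4deg : P4.natDegree = 4 := by
    rw [hP4def, natDegree_prod _ _ fun i _ => X_sub_C_ne_zero (r i)]
    simp [natDegree_X_sub_C]
  set D : K[X] := G - C G.leadingCoeff * P4 with hDdef
  have hD4 : D.coeff 4 = 0 := by
    rw [hDdef, coeff_sub, coeff_C_mul]
    have e1 : G.coeff 4 = G.leadingCoeff := by rw [Polynomial.leadingCoeff, hGdeg]
    have e2 : P4.coeff 4 = 1 := by
      have := hP4monic.coeff_natDegree
      rwa [hP4deg] at this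
    rw [e1, e2, mul_one, sub_self]
  have hdeg_le : D.natDegree ≤ 4 := by
    refine (natDegree_sub_le _ _).trans ?_
    rw [hGdeg]
    have : (C G.leadingCoeff * P4).natDegree = 4 := by
      rw [natDegree_C_mul (leadingCoeff_ne_zero.mpr hGne), hP4deg]
    omega
  -- evaluate at the four distinct conjugates
  set s' : Finset K := (Finset.range 4).image r with hs'def
  have hs'card : s'.card = 4 := by
    rw [hs'def, Finset.card_image_of_injOn, Finset.card_range]
    intro i hi j hj hij
    simp only [Finset.mem_coe, Finset.mem_range] at hi hj
    by_contra hne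
    rcases Nat.lt_or_ge i j with h | h
    · exact hdist i j h hj hij
    · exact hdist j i (by omega) hi hij.symm
  have hD0 : D = 0 := by
    rcases eq_or_ne D 0 with h | hDne
    · exact h
    have hD3 : D.natDegree ≤ 3 := by
      by_contra hgt
      push_neg at hgt
      have h4 : D.natDegree = 4 := by omega
      exact hDne (leadingCoeff_eq_zero.mp (by rw [Polynomial.leadingCoeff, h4]; exact hD4))
    apply Polynomial.eq_zero_of_natDegree_lt_card_of_eval_eq_zero' D s'
    · intro x hx
      rw [hs'def] at hx
      simp only [Finset.mem_image, Finset.mem_range] at hx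
      obtain ⟨j, hj4, rfl⟩ := hx
      rw [hDdef]
      have e1 : G.eval (r j) = 0 := by
        rw [hGdef, eval_map, ← aeval_def, hroots j]
      have e2 : P4.eval (r j) = 0 := by
        rw [hP4def, eval_prod]
        apply Finset.prod_eq_zero (Finset.mem_range.mpr hj4)
        simp
      rw [eval_sub, eval_mul, e1, e2, mul_zero, sub_zero]
    · rw [hs'card]; omega
  have hGeq : G = C G.leadingCoeff * P4 := sub_eq_zero.mp hD0
  have hS4 : ∑ j ∈ Finset.range 4, r j = 0 := by
    have hc3 : G.coeff 3 = 0 := by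
      rw [hGdef, coeff_map, hgc3, map_zero]
    have hc3' : P4.coeff 3 = -∑ j ∈ Finset.range 4, r j := by
      have := prod_X_sub_C_coeff_card_pred (Finset.range 4) r (by simp)
      rwa [Finset.card_range] at this
    rw [hGeq, coeff_C_mul, hc3', mul_neg] at hc3
    rcases mul_eq_zero.mp (neg_eq_zero.mp hc3) with h | h
    · exact absurd h (leadingCoeff_ne_zero.mpr hGne)
    · exact h
  -- the Artin–Schreier element
  have htwoK : (2 : K) = 0 := CharTwo.two_eq_zero
  set u : K := ι (a / b ^ 2) * (ι c + β) with hudef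
  have hupow : ∀ j, u ^ 2 ^ (k * j) = ι (a / b ^ 2) * (ι c + β ^ 2 ^ (k * j)) := by
    intro j
    have hFfix : ∀ w : F, w ^ 2 ^ (k * j) = w := by
      intro w
      rw [pow_mul, ← hcardF]
      exact FiniteField.pow_card_pow j w
    rw [hudef, mul_pow, add_pow_char_pow, ← map_pow, ← map_pow, hFfix, hFfix]
  have hSexp : β + β ^ 2 ^ (k * 1) + β ^ 2 ^ (k * 2) + β ^ 2 ^ (k * 3) = 0 := by
    have h0 : r 0 = β := by rw [hrdef]; simp
    have := hS4
    rw [Finset.sum_range_succ, Finset.sum_range_succ, Finset.sum_range_succ,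
      Finset.sum_range_one, h0] at this
    simpa [hrdef] using this
  have hSu : u + u ^ 2 ^ k + u ^ 2 ^ (2 * k) + u ^ 2 ^ (3 * k) = 0 := by
    have e1 : u ^ 2 ^ k = u ^ 2 ^ (k * 1) := by norm_num
    have e2 : u ^ 2 ^ (2 * k) = u ^ 2 ^ (k * 2) := by rw [Nat.mul_comm]
    have e3 : u ^ 2 ^ (3 * k) = u ^ 2 ^ (k * 3) := by rw [Nat.mul_comm]
    rw [e1, e2, e3, hupow, hupow, hupow, hudef]
    linear_combination (ι (a / b ^ 2)) * hSexp + (2 * ι (a / b ^ 2) * ι c) * htwoK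
  have hT : ∑ i ∈ Finset.range (4 * k), u ^ 2 ^ i = 0 := trace_sum_zero k u hSu
  obtain ⟨z, hz⟩ := artin_schreier_solvable (by omega) hcardK u hT
  set y : K := ι (b / a) * z with hydef
  have hA : ι a ≠ 0 := fun h => ha (hιinj (by rw [h, map_zero]))
  have hB : ι b ≠ 0 := fun h => hb (hιinj (by rw [h, map_zero]))
  have hy : aeval y f = β := by
    have e : aeval y f = ι a * y ^ 2 + ι b * y + ι c := by
      have e0 : aeval y (C a * X ^ 2 + C b * X + C c) = ι a * y ^ 2 + ι b * y + ι c := by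
        simp only [map_add, map_mul, map_pow, aeval_C, aeval_X, hιdef]
      rw [← hfd] at e0
      exact e0
    rw [e, hydef, map_div₀]
    have hueq : ι b ^ 2 * u = ι a * (ι c + β) := by
      rw [hudef, map_div₀, map_pow]
      rw [← mul_assoc, mul_div_assoc', mul_comm (ι b ^ 2) (ι a), mul_div_assoc,
        div_self (pow_ne_zero 2 hB), mul_one]
    have hAi : ι a * (ι a)⁻¹ = 1 := mul_inv_cancel₀ hA
    have hBi : ι b * (ι b)⁻¹ = 1 := mul_inv_cancel₀ hB
    have hu' : u = ι a * (ι b)⁻¹ ^ 2 * (ι c + β) := by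
      rw [hudef, map_div₀, map_pow, div_eq_mul_inv, inv_pow]
    linear_combination (ι b ^ 2 * (ι a)⁻¹ * z ^ 2) * hAi + (ι b ^ 2 * (ι a)⁻¹) * hz
      + (ι b ^ 2 * (ι a)⁻¹) * hu' + ((ι c + β) * (ι b * (ι b)⁻¹) ^ 2) * hAi
      + ((ι c + β) * (ι b * (ι b)⁻¹ + 1)) * hBi + ι c * htwoK
  -- y is a root of the third iterate, living in a degree-4 extension
  have hy3 : aeval y ((f.comp f).comp f) = 0 := by
    rw [aeval_comp, hy, hβroot]
  have hmin : minpoly F y ∣ (f.comp f).comp f := minpoly.dvd F y hy3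
  have hyint : IsIntegral F y := IsIntegral.of_finite F y
  obtain ⟨t, ht⟩ := hmin
  have htu : IsUnit t := (h3.isUnit_or_isUnit ht).resolve_left (minpoly.not_isUnit F y)
  have hdeg8 : ((f.comp f).comp f).natDegree = 8 := by
    rw [natDegree_comp, hg4, hf]
  have hdegt : t.natDegree = 0 := natDegree_eq_zero_of_isUnit htu
  have hmne : minpoly F y ≠ 0 := minpoly.ne_zero hyint
  have h8 : (minpoly F y).natDegree = 8 := by
    have := congrArg natDegree ht
    rw [natDegree_mul hmne htu.ne_zero, hdegt, hdeg8] at this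
    omega
  have hle : (minpoly F y).natDegree ≤ 4 := hrank ▸ minpoly.natDegree_le y
  omega
end

section
/- Let q be an odd prime power and f(X) = aX² + bX + c ∈ F_q[X] with a ≠ 0, and let γ = -b/(2a) be the unique critical point of f. Suppose g ∈ F_q[X] is such that g ∘ f^(n-1) has degree d, leading coefficient e, and is irreducible over F_q, for some n ≥ 1. Then g ∘ f^(n) is irreducible over F_q if and only if (-a)^d · g(f^(n)(γ))/e is a non-square in F_q. -/
open Polynomial

section Aux

variable (F K : Type*) [Field F] [Fintype F] [Field K] [Algebra F K]

/-- Frobenius-power algebra endomorphisms of an extension of a finite field. -/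
lemma exists_frobAlgHom (i : ℕ) :
    ∃ ρ : K →ₐ[F] K, ∀ x : K, ρ x = x ^ (Fintype.card F) ^ i := by
  set p := ringChar F with hp
  haveI : CharP F p := ringChar.charP F
  obtain ⟨n, hpp, hcard⟩ := FiniteField.card F p
  haveI : CharP K p := charP_of_injective_algebraMap (algebraMap F K).injective p
  haveI : ExpChar K p := .prime hpp
  refine ⟨{ (iterateFrobenius K p (n * i)) with
      commutes' := fun y => ?_ }, fun x => ?_⟩
  · show iterateFrobenius K p (n * i) (algebraMap F K y) = algebraMap F K y
    rw [iterateFrobenius_def, ← map_pow, pow_mul, ← hcard, FiniteField.pow_card_pow]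
  · show iterateFrobenius K p (n * i) x = _
    rw [iterateFrobenius_def, hcard, ← pow_mul]

/-- In a finite field of cardinality `Q`, no exponent `2 ≤ N < Q` satisfies `x^N = x` for all. -/
lemma no_small_exponent [Fintype K] {N : ℕ} (h2 : 2 ≤ N) (hN : N < Fintype.card K)
    (h : ∀ x : K, x ^ N = x) : False := by
  classical
  have hdeg : (X ^ N - X : K[X]).natDegree = N := by
    rw [natDegree_sub_eq_left_of_natDegree_lt] <;>
      simp only [natDegree_X_pow, natDegree_X] <;> omega
  have hne : (X ^ N - X : K[X]) ≠ 0 := by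
    intro h0
    rw [h0, natDegree_zero] at hdeg; omega
  have hsub : (Finset.univ : Finset K) ⊆ (X ^ N - X : K[X]).roots.toFinset := by
    intro x _
    rw [Multiset.mem_toFinset, mem_roots hne]
    simp [IsRoot, h x]
  have := Finset.card_le_card hsub
  rw [Finset.card_univ] at this
  have h2' := Multiset.toFinset_card_le (X ^ N - X : K[X]).roots
  have h3 := (X ^ N - X : K[X]).card_roots'
  omega

lemma geom_sum_nat (q : ℕ) (hq : 1 ≤ q) (d : ℕ) :
    (∑ i ∈ Finset.range d, q ^ i) * (q - 1) + 1 = q ^ d := by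
  induction d with
  | zero => simp
  | succ d ih =>
    rw [Finset.sum_range_succ, add_mul, pow_succ]
    have : q ^ d * (q - 1) = q ^ d * q - q ^ d := by
      rw [Nat.mul_sub, mul_one]
    have hle : q ^ d ≤ q ^ d * q := Nat.le_mul_of_pos_right _ (by omega)
    omega

/-- Squareness transfers through the "norm-like" power map between finite fields. -/
lemma isSquare_transfer [Fintype K] (hodd : Odd (Fintype.card F)) {d : ℕ} (hd : 0 < d)
    (hcard : Fintype.card K = Fintype.card F ^ d) (x : K) (y : F)
    (hxy : algebraMap F K y = x ^ (∑ i ∈ Finset.range d, (Fintype.card F) ^ i)) :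
    (IsSquare x ↔ IsSquare y) := by
  set q := Fintype.card F with hq
  set s := ∑ i ∈ Finset.range d, q ^ i with hs
  have hq2 : 2 ≤ q := Fintype.one_lt_card
  have hs1 : 1 ≤ s := by
    rw [hs]
    calc 1 = ∑ i ∈ Finset.range 1, q ^ i := by simp
    _ ≤ _ := Finset.sum_le_sum_of_subset (by simpa using hd)
  have hgeom := geom_sum_nat q (by omega) d
  have hoddK : Odd (Fintype.card K) := by rw [hcard]; exact hodd.pow
  obtain ⟨u, hu⟩ := hodd
  have hcharF : ringChar F ≠ 2 := by
    intro hc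
    have := FiniteField.even_card_iff_char_two.mp hc
    omega
  have hcharK : ringChar K ≠ 2 := by
    intro hc
    have h2 := FiniteField.even_card_iff_char_two.mp hc
    rcases hoddK with ⟨k, hk⟩
    omega
  rcases eq_or_ne x 0 with rfl | hx
  · have : y = 0 := by
      have : algebraMap F K y = 0 := by rw [hxy, zero_pow (by omega)]
      exact (_root_.map_eq_zero (algebraMap F K)).mp this
    subst this
    simp
  · have hy : y ≠ 0 := by
      rintro rfl
      rw [map_zero] at hxy
      exact hx (pow_eq_zero_iff (by omega) |>.mp hxy.symm)
    rw [FiniteField.isSquare_iff hcharK hx, FiniteField.isSquare_iff hcharF hy]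
    -- arithmetic : s * (q / 2) = card K / 2
    have hq2' : q / 2 = u := by omega
    have hK2 : Fintype.card K / 2 = s * u := by
      have h1 : q - 1 = 2 * u := by omega
      have h2 : s * (q - 1) = 2 * (s * u) := by rw [h1]; ring
      have h3 : Fintype.card K = 2 * (s * u) + 1 := by
        rw [hcard, ← hgeom, h2]
      omega
    rw [hK2, hq2']
    constructor
    · intro h
      have h1 : (algebraMap F K) (y ^ u) = 1 := by
        rw [map_pow, hxy, ← pow_mul, h]
      exact (map_eq_one_iff _ (algebraMap F K).injective).mp h1
    · intro h
      rw [pow_mul, ← hxy, ← map_pow, h, map_one]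
  
end Aux


section Key

variable {F : Type*} [Field F] [Fintype F]

/-- squares and unit-square factors -/
lemma isSquare_unit_sq_mul {K : Type*} [Field K] (u : K) (hu : u ≠ 0) (x : K) :
    IsSquare (u ^ 2 * x) ↔ IsSquare x := by
  constructor
  · rintro ⟨r, hr⟩
    exact ⟨r / u, by field_simp; linear_combination hr⟩
  · rintro ⟨r, hr⟩
    exact ⟨u * r, by rw [hr]; ring⟩

theorem jones_key (hodd : Odd (Fintype.card F)) (a b c : F) (ha : a ≠ 0)
    (h : F[X]) (hirr : Irreducible h) :
    Irreducible (h.comp (C a * X ^ 2 + C b * X + C c)) ↔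
      ¬ IsSquare ((-a) ^ h.natDegree *
        h.eval ((C a * X ^ 2 + C b * X + C c : F[X]).eval (-b / (2 * a))) / h.leadingCoeff) := by
  classical
  set q := Fintype.card F with hq
  have hq2 : 2 ≤ q := Fintype.one_lt_card
  set fp : F[X] := C a * X ^ 2 + C b * X + C c with hfp
  set d := h.natDegree with hdd
  set e := h.leadingCoeff with hee
  set z : F := fp.eval (-b / (2 * a)) with hz
  have hd0 : 0 < d := hirr.natDegree_pos
  have hne : h ≠ 0 := hirr.ne_zero
  have he0 : e ≠ 0 := leadingCoeff_ne_zero.mpr hne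
  haveI : Fact (Irreducible h) := ⟨hirr⟩
  set K := AdjoinRoot h with hK
  set φ := algebraMap F K with hφ
  have hφinj : Function.Injective φ := (algebraMap F K).injective
  set β := AdjoinRoot.root h with hβdef
  have hβ : aeval β h = 0 := by
    rw [aeval_def, AdjoinRoot.algebraMap_eq]
    exact AdjoinRoot.eval₂_root h
  set pb := AdjoinRoot.powerBasis hne with hpb
  haveI : FiniteDimensional F K := pb.finite
  haveI : Finite K := Module.finite_of_finite F
  letI : Fintype K := Fintype.ofFinite K
  have hfinrank : Module.finrank F K = d := by
    rw [pb.finrank, hpb, AdjoinRoot.powerBasis_dim]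
  have hcardK : Fintype.card K = q ^ d := by
    have := Module.card_fintype pb.basis
    rwa [Fintype.card_fin, hpb, AdjoinRoot.powerBasis_dim] at this
  -- characteristic facts
  obtain ⟨uq, huq⟩ := id hodd
  have hcharF : ringChar F ≠ 2 := by
    intro hc; have := FiniteField.even_card_iff_char_two.mp hc; omega
  have hcharK : ringChar K ≠ 2 := by
    intro hc
    have h2 := FiniteField.even_card_iff_char_two.mp hc
    have : Odd (Fintype.card K) := by rw [hcardK]; exact (hodd).pow
    rcases this with ⟨k, hk⟩; omega
  have h2F : (2 : F) ≠ 0 := Ring.two_ne_zero hcharF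
  have h2K : (2 : K) ≠ 0 := Ring.two_ne_zero hcharK
  haveI : NeZero (2 : K) := ⟨h2K⟩
  -- Frobenius powers
  choose ρ hρ using fun i => exists_frobAlgHom F K i
  have hxqd : ∀ x : K, x ^ q ^ d = x := by
    intro x; rw [← hcardK]; exact FiniteField.pow_card x
  -- distinctness of Frobenius orbit of β
  have hkey : ∀ m, 0 < m → m < d → β ^ q ^ m ≠ β := by
    intro m hm hmd hcontra
    have hid : ρ m = AlgHom.id F K := AdjoinRoot.algHom_ext (by rw [hρ]; exact hcontra)
    have hall : ∀ x : K, x ^ q ^ m = x := by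
      intro x
      have h1 := hρ m x
      rw [hid] at h1
      simpa using h1.symm
    refine no_small_exponent K (N := q ^ m) ?_ ?_ hall
    · calc 2 ≤ q := hq2
        _ = q ^ 1 := (pow_one q).symm
        _ ≤ q ^ m := Nat.pow_le_pow_right (by omega) hm
    · rw [hcardK]; exact Nat.pow_lt_pow_right (by omega) hmd
  have hinj : Set.InjOn (fun i => β ^ q ^ i) (Finset.range d) := by
    intro i hi j hj hij
    have hij' : β ^ q ^ i = β ^ q ^ j := hij
    simp only [Finset.coe_range, Set.mem_Iio] at hi hj
    by_contra hne'
    rcases Nat.lt_or_ge i j with hlt | hge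
    · have : (β ^ q ^ i) ^ q ^ (d - j) = (β ^ q ^ j) ^ q ^ (d - j) := by rw [hij']
      rw [← pow_mul, ← pow_mul, ← pow_add, ← pow_add] at this
      have hji : j + (d - j) = d := by omega
      rw [hji, hxqd] at this
      exact hkey (i + (d - j)) (by omega) (by omega) this
    · have hlt : j < i := by omega
      have : (β ^ q ^ j) ^ q ^ (d - i) = (β ^ q ^ i) ^ q ^ (d - i) := by rw [hij']
      rw [← pow_mul, ← pow_mul, ← pow_add, ← pow_add] at this
      have hii : i + (d - i) = d := by omega
      rw [hii, hxqd] at this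
      exact hkey (j + (d - i)) (by omega) (by omega) this
  -- the Frobenius orbit of β
  set S : Finset K := (Finset.range d).image (fun i => β ^ q ^ i) with hS
  have hScard : S.card = d := by
    rw [hS, Finset.card_image_of_injOn hinj, Finset.card_range]
  -- the monicized minimal polynomial
  have hmapne : h.map φ ≠ 0 := (Polynomial.map_ne_zero_iff hφinj).mpr hne
  have hlcmap : (h.map φ).leadingCoeff = φ e := leadingCoeff_map_of_leadingCoeff_ne_zero φ
    (by rw [← hee]; exact fun h0 => he0 (hφinj (by rwa [map_zero])))
  set M₀ : K[X] := h.map φ * C (φ e)⁻¹ with hM₀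
  have hM₀monic : M₀.Monic := by
    have := monic_mul_leadingCoeff_inv hmapne
    rwa [hlcmap] at this
  have hφe : φ e ≠ 0 := fun h0 => he0 (hφinj (by rwa [map_zero]))
  have hM₀deg : M₀.natDegree = d := by
    rw [hM₀, natDegree_mul hmapne (by simpa using inv_ne_zero hφe), natDegree_C,
      natDegree_map, add_zero]
  have hrootmem : ∀ i, i ∈ Finset.range d → M₀.eval (β ^ q ^ i) = 0 := by
    intro i _
    have h1 : (h.map φ).eval (β ^ q ^ i) = 0 := by
      rw [← hρ i β]
      have h2 := aeval_algHom_apply (ρ i) β h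
      rw [hβ, map_zero] at h2
      rwa [aeval_def, ← eval_map] at h2
    rw [hM₀, eval_mul, h1, zero_mul]
  have hSroots : S.val ≤ M₀.roots := by
    rw [Multiset.le_iff_subset S.nodup]
    intro x hx
    rw [Finset.mem_val, hS, Finset.mem_image] at hx
    obtain ⟨i, hi, rfl⟩ := hx
    rw [mem_roots hM₀monic.ne_zero]
    exact hrootmem i hi
  have hrootseq : M₀.roots = S.val := by
    refine (Multiset.eq_of_le_of_card_le hSroots ?_).symm
    have h1 := M₀.card_roots'
    rw [hM₀deg] at h1
    calc Multiset.card M₀.roots ≤ d := h1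
      _ = Multiset.card S.val := by rw [← hScard, Finset.card_def]
  have hM₀prod : M₀ = (M₀.roots.map fun r => X - C r).prod := by
    obtain ⟨w, hw⟩ := M₀.prod_multiset_X_sub_C_dvd
    have hwne : w ≠ 0 := by
      rintro rfl
      rw [mul_zero] at hw
      exact hM₀monic.ne_zero hw
    have hprodmonic : (M₀.roots.map fun r => X - C r).prod.Monic :=
      monic_multiset_prod_of_monic _ _ (fun r _ => monic_X_sub_C r)
    have hdegw : w.natDegree = 0 := by
      have h1 := natDegree_mul (hprodmonic.ne_zero) hwne
      rw [← hw, hM₀deg, natDegree_multiset_prod_X_sub_C_eq_card, hrootseq] at h1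
      have h2 : Multiset.card S.val = d := by rw [← hScard, Finset.card_def]
      omega
    have hwmonic : w.Monic := by
      have h1 := leadingCoeff_mul (M₀.roots.map fun r => X - C r).prod w
      rw [← hw, hM₀monic.leadingCoeff, hprodmonic.leadingCoeff, one_mul] at h1
      exact h1.symm
    conv_lhs => rw [hw]
    rw [hwmonic.natDegree_eq_zero.mp hdegw, mul_one]
  -- evaluation at Z
  set Z : K := φ z with hZ
  have hevalZ : M₀.eval Z = ∏ i ∈ Finset.range d, (Z - β ^ q ^ i) := by
    conv_lhs => rw [hM₀prod]
    rw [eval_multiset_prod, hrootseq, Multiset.map_map]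
    have : (Finset.prod S fun r => Z - r) = ∏ i ∈ Finset.range d, (Z - β ^ q ^ i) := by
      rw [hS, Finset.prod_image hinj]
    rw [← this, Finset.prod]
    congr 1
    apply Multiset.map_congr rfl
    intro x _
    simp [eval_sub, eval_X, eval_C]
  -- the criterion value
  set s : ℕ := ∑ i ∈ Finset.range d, q ^ i with hs
  set t : K := φ a * (β - Z) with ht
  set v : F := (-a) ^ d * h.eval z / e with hv
  have hts : t ^ s = φ v := by
    rw [hs, ← Finset.prod_pow_eq_pow_sum]
    have h1 : ∀ i ∈ Finset.range d, t ^ q ^ i = φ a * (β ^ q ^ i - Z) := by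
      intro i _
      rw [← hρ i t, ht, map_mul, map_sub, AlgHom.commutes, hρ i β]
      have : (ρ i) Z = Z := by rw [hZ]; exact AlgHom.commutes _ _
      rw [this]
    rw [Finset.prod_congr rfl h1]
    have h2 : ∀ i ∈ Finset.range d, φ a * (β ^ q ^ i - Z) = φ a * (-1) * (Z - β ^ q ^ i) := by
      intro i _; ring
    rw [Finset.prod_congr rfl h2, Finset.prod_mul_distrib, Finset.prod_const, ← hevalZ]
    have h3 : M₀.eval Z = φ (h.eval z) * (φ e)⁻¹ := by
      rw [hM₀, eval_mul, eval_C, hZ, eval_map, eval₂_hom]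
    rw [h3, hv, Finset.card_range, map_div₀, map_mul, map_pow, map_neg]
    rw [div_eq_mul_inv]
    try ring
  -- nonzero images
  have haK : φ a ≠ 0 := fun h0 => ha (hφinj (by rwa [map_zero]))
  -- the discriminant identity
  have hz4 : 4 * (a * z) = 4 * a * c - b ^ 2 := by
    rw [hz, hfp]
    simp only [eval_add, eval_mul, eval_pow, eval_C, eval_X]
    field_simp
    ring
  have hφz4 := congrArg φ hz4
  simp only [map_mul, map_sub, map_pow, map_ofNat] at hφz4
  have hdisc : discrim (φ a) (φ b) (φ c - β) = 2 ^ 2 * t := by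
    rw [discrim, ht, hZ]
    linear_combination hφz4
  -- root of the K-quadratic iff t is a square
  have hquad : (∃ x : K, φ a * (x * x) + φ b * x + (φ c - β) = 0) ↔ IsSquare t := by
    constructor
    · rintro ⟨x, hx⟩
      have hd2 := (quadratic_eq_zero_iff_discrim_eq_sq haK x).mp hx
      rw [hdisc] at hd2
      exact (isSquare_unit_sq_mul 2 h2K t).mp ⟨2 * φ a * x + φ b, by rw [hd2, pow_two]⟩
    · rintro ⟨r, hr⟩
      have hsq : ∃ s', discrim (φ a) (φ b) (φ c - β) = s' * s' :=
        ⟨2 * r, by rw [hdisc, hr]; ring⟩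
      obtain ⟨x, hx⟩ := exists_quadratic_eq_zero haK hsq
      exact ⟨x, hx⟩
  -- degree bookkeeping for the composition
  have hfpdeg : fp.natDegree = 2 := by rw [hfp]; exact natDegree_quadratic ha
  have hcompdeg : (h.comp fp).natDegree = d * 2 := by rw [natDegree_comp, hfpdeg]
  have hcompne : h.comp fp ≠ 0 := by
    intro h0
    rw [h0, natDegree_zero] at hcompdeg
    omega
  have hcompnotunit : ¬IsUnit (h.comp fp) := by
    apply not_isUnit_of_natDegree_pos
    omega
  -- irreducibility iff no root of the quadratic in K
  have hiff1 : Irreducible (h.comp fp) ↔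
      ¬∃ x : K, φ a * (x * x) + φ b * x + (φ c - β) = 0 := by
    constructor
    · intro hi
      rintro ⟨x₀, hx₀⟩
      have h5 : aeval x₀ fp = φ a * x₀ ^ 2 + φ b * x₀ + φ c := by
        rw [hfp]; simp [hφ]
      have h6 : aeval x₀ fp = β := by
        rw [h5]; linear_combination hx₀
      have haev : aeval x₀ (h.comp fp) = 0 := by
        rw [aeval_comp, h6, hβ]
      have hint : IsIntegral F x₀ := .of_finite F x₀
      obtain ⟨w, hw⟩ := minpoly.dvd F x₀ haev
      rcases hi.isUnit_or_isUnit hw with hu | hu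
      · have := natDegree_eq_zero_of_isUnit hu
        have := minpoly.natDegree_pos hint
        omega
      · have hw0 : w.natDegree = 0 := natDegree_eq_zero_of_isUnit hu
        have hwne : w ≠ 0 := hu.ne_zero
        have h7 := natDegree_mul (minpoly.ne_zero hint) hwne
        rw [← hw, hcompdeg] at h7
        have h8 := minpoly.natDegree_le (A := F) x₀
        rw [hfinrank] at h8
        omega
    · intro hno
      obtain ⟨P, hPirr, hPdvd⟩ := WfDvdMonoid.exists_irreducible_factor hcompnotunit hcompne
      haveI : Fact (Irreducible P) := ⟨hPirr⟩
      have hPne : P ≠ 0 := hPirr.ne_zero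
      set M := AdjoinRoot P with hM
      set pbP := AdjoinRoot.powerBasis hPne with hpbP
      haveI : FiniteDimensional F M := pbP.finite
      haveI : Finite M := Module.finite_of_finite F
      letI : Fintype M := Fintype.ofFinite M
      have hfinrankM : Module.finrank F M = P.natDegree := by
        rw [pbP.finrank, hpbP, AdjoinRoot.powerBasis_dim]
      have hcardM : Fintype.card M = q ^ P.natDegree := by
        have := Module.card_fintype pbP.basis
        rwa [Fintype.card_fin, hpbP, AdjoinRoot.powerBasis_dim] at this
      set y := AdjoinRoot.root P with hy
      have hyP : aeval y P = 0 := by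
        rw [aeval_def, AdjoinRoot.algebraMap_eq]
        exact AdjoinRoot.eval₂_root P
      have hyc : aeval y (h.comp fp) = 0 := by
        obtain ⟨w, hw⟩ := hPdvd
        rw [hw, map_mul, hyP, zero_mul]
      set β₀ := aeval y fp with hβ₀def
      have hβ₀ : aeval β₀ h = 0 := by
        rw [hβ₀def, ← aeval_comp]
        exact hyc
      have hminβ₀ : minpoly F β₀ = h * C e⁻¹ := (minpoly.eq_of_irreducible hirr hβ₀).symm
      have hCene : (C e⁻¹ : F[X]) ≠ 0 := by
        simpa using inv_ne_zero he0
      have hdegβ₀ : (minpoly F β₀).natDegree = d := by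
        rw [hminβ₀, natDegree_mul hne hCene, natDegree_C, add_zero]
      have hddvd : d ∣ P.natDegree := by
        have := minpoly.degree_dvd (IsIntegral.of_finite F β₀)
        rwa [hdegβ₀, hfinrankM] at this
      have hPd1 : 0 < P.natDegree := hPirr.natDegree_pos
      have hPd2 : P.natDegree ≤ d * 2 := by
        have := natDegree_le_of_dvd hPdvd hcompne
        omega
      obtain ⟨m, hm⟩ := hddvd
      have hm2 : m = 1 ∨ m = 2 := by
        rcases Nat.lt_or_ge m 3 with hlt | hge
        · interval_cases m
          · omega
          · left; rfl
          · right; rfl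
        · exfalso
          have : d * 3 ≤ d * m := Nat.mul_le_mul_left d hge
          omega
      rcases hm2 with rfl | rfl
      · -- degree d factor : produces a root of the quadratic in K, contradiction
        exfalso
        rw [mul_one] at hm
        set ψ := AdjoinRoot.liftAlgHom h (Algebra.ofId F M) β₀ hβ₀ with hψ
        have hψinj : Function.Injective ψ := ψ.toRingHom.injective
        have hψsurj : Function.Surjective ψ := by
          have hcards : Fintype.card K = Fintype.card M := by rw [hcardK, hcardM, hm]
          exact ((Fintype.bijective_iff_injective_and_card ψ).mpr ⟨hψinj, hcards⟩).surjective
        obtain ⟨x₀, hx₀⟩ := hψsurj y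
        refine hno ⟨x₀, hψinj ?_⟩
        rw [map_zero]
        have hψβ : ψ β = β₀ := AdjoinRoot.liftAlgHom_root h (Algebra.ofId F M) β₀ hβ₀
        have hβ₀eval : β₀ = algebraMap F M a * y ^ 2 + algebraMap F M b * y
            + algebraMap F M c := by
          rw [hβ₀def, hfp]; simp [← AdjoinRoot.algebraMap_eq]; rfl
        simp only [map_add, map_mul, map_sub, hx₀, hψβ]
        have hψa : ψ (φ a) = algebraMap F M a := ψ.commutes a
        have hψb : ψ (φ b) = algebraMap F M b := ψ.commutes b
        have hψc : ψ (φ c) = algebraMap F M c := ψ.commutes c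
        rw [hψa, hψb, hψc, hβ₀eval]
        ring
      · -- full degree factor : the composition is irreducible
        obtain ⟨w, hw⟩ := hPdvd
        have hwne : w ≠ 0 := by
          rintro rfl
          rw [mul_zero] at hw
          exact hcompne hw
        have h7 := natDegree_mul hPne hwne
        rw [← hw, hcompdeg, hm] at h7
        have hw0 : w.natDegree = 0 := by omega
        have hwC := Polynomial.eq_C_of_natDegree_eq_zero hw0
        have hcoeffne : w.coeff 0 ≠ 0 := by
          intro h0
          apply hwne
          rw [hwC, h0, map_zero]
        have hwunit : IsUnit w := by
          rw [hwC]
          exact isUnit_C.mpr (isUnit_iff_ne_zero.mpr hcoeffne)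
        have hassoc : Associated P (h.comp fp) := ⟨hwunit.unit, by rw [IsUnit.unit_spec, ← hw]⟩
        exact hassoc.irreducible hPirr
  -- final assembly
  have htv : IsSquare t ↔ IsSquare v :=
    isSquare_transfer F K hodd hd0 hcardK t v hts.symm
  rw [hiff1]
  exact not_congr (hquad.trans htv)

end Key


/-- Jones–Boston criterion: with `f = aX²+bX+c`, `γ = -b/(2a)`, if `g ∘ f^(n-1)` has degree `d`,
leading coefficient `e`, and is irreducible, then `g ∘ f^(n)` is irreducible iff
`(-a)^d · g(f^(n)(γ))/e` is a non-square. -/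
theorem stmt_4 (F : Type*) [Field F] [Fintype F] (hodd : Odd (Fintype.card F))
    (a b c : F) (ha : a ≠ 0) (g : F[X]) (n d : ℕ) (hn : 1 ≤ n) (e : F)
    (hd : (g.comp ((fun p => (C a * X ^ 2 + C b * X + C c : F[X]).comp p)^[n - 1] X)).natDegree = d)
    (he : (g.comp ((fun p => (C a * X ^ 2 + C b * X + C c : F[X]).comp p)^[n - 1] X)).leadingCoeff = e)
    (hirr : Irreducible (g.comp ((fun p => (C a * X ^ 2 + C b * X + C c : F[X]).comp p)^[n - 1] X))) :
    Irreducible (g.comp ((fun p => (C a * X ^ 2 + C b * X + C c : F[X]).comp p)^[n] X)) ↔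
      ¬ IsSquare ((-a) ^ d *
        g.eval (((fun p => (C a * X ^ 2 + C b * X + C c : F[X]).comp p)^[n] X).eval
          (-b / (2 * a))) / e) := by
  subst hd he
  set fp : F[X] := C a * X ^ 2 + C b * X + C c with hfp
  have hiter : ∀ k : ℕ, (fun p => fp.comp p)^[k + 1] X = ((fun p => fp.comp p)^[k] X).comp fp := by
    intro k
    induction k with
    | zero => simp
    | succ k ih =>
      calc (fun p => fp.comp p)^[k + 1 + 1] X
          = fp.comp ((fun p => fp.comp p)^[k + 1] X) :=
            Function.iterate_succ_apply' (fun p => fp.comp p) (k + 1) X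
        _ = fp.comp (((fun p => fp.comp p)^[k] X).comp fp) := by rw [ih]
        _ = (fp.comp ((fun p => fp.comp p)^[k] X)).comp fp := by
            first
            | rw [comp_assoc]
            | rw [← comp_assoc]
        _ = ((fun p => fp.comp p)^[k + 1] X).comp fp := by
            rw [Function.iterate_succ_apply' (fun p => fp.comp p) k]
  have hmain : (fun p => fp.comp p)^[n] X = ((fun p => fp.comp p)^[n - 1] X).comp fp := by
    have := hiter (n - 1)
    rwa [Nat.sub_add_cancel hn] at this
  set h := g.comp ((fun p => fp.comp p)^[n - 1] X) with hh
  have hcompeq : g.comp ((fun p => fp.comp p)^[n] X) = h.comp fp := by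
    rw [hmain, hh, comp_assoc]
  have hevaleq : g.eval (((fun p => fp.comp p)^[n] X).eval (-b / (2 * a)))
      = h.eval (fp.eval (-b / (2 * a))) := by
    rw [hmain, eval_comp, hh, eval_comp]
  rw [hcompeq, hevaleq]
  exact jones_key hodd a b c ha h hirr
end

section
/- Let F_q be a finite field in which -1 is a square (e.g., characteristic p ≡ 1 mod 4, or q an even power of p). Fix b ∈ F_q*. For a ∈ F_q*, let f_a(X) = a(X - b)² + b. Then the set F = { f_a : a ∈ F_q*, a·b is a non-square in F_q } has cardinality (q-1)/2 and is dynamically irreducible: every composition f_{a_{i_1}} ∘ ... ∘ f_{a_{i_n}} of members of F is irreducible over F_q. -/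
open Polynomial IntermediateField

universe u

lemma sq_mul_isSquare {K : Type*} [Field K] {x s : K} (hs : s ≠ 0)
    (h : IsSquare (x * s ^ 2)) : IsSquare x := by
  obtain ⟨t, ht⟩ := h
  exact ⟨t / s, by field_simp; linear_combination ht⟩

lemma irred_comp_linear {K : Type*} [Field K] {p : K[X]} (hp : Irreducible p) (r : K) :
    Irreducible (p.comp (X - C r)) := by
  let e : K[X] ≃+* K[X] :=
    { toFun := fun q => q.comp (X - C r)
      invFun := fun q => q.comp (X + C r)
      left_inv := fun q => by show (q.comp _).comp _ = q; rw [comp_assoc]; simp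
      right_inv := fun q => by show (q.comp _).comp _ = q; rw [comp_assoc]; simp
      map_add' := fun a b => by simp
      map_mul' := fun a b => by simp }
  exact (MulEquiv.irreducible_iff e.toMulEquiv).mpr hp

theorem two_pow_irred {n : ℕ} : ∀ (K : Type u) [Field K], IsSquare (-1 : K) →
    ∀ {a : K}, ¬ IsSquare a → Irreducible (X ^ (2 ^ n) - C a) := by
  induction n with
  | zero => intro K _ _ a _; simpa using irreducible_X_sub_C a
  | succ n IH =>
    intro K _ hK a ha
    rw [pow_succ]
    have h2 : Irreducible (X ^ 2 - C a) :=
      X_pow_sub_C_irreducible_of_prime Nat.prime_two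
        (fun t ht => ha ⟨t, by rw [← ht]; ring⟩)
    apply X_pow_mul_sub_C_irreducible h2
    intro E _ _ x hx
    have hint : IsIntegral K x := not_not.mp fun h ↦ by
      simpa only [degree_zero, degree_X_pow_sub_C (by norm_num : 0 < 2),
        WithBot.natCast_ne_bot] using congr_arg degree (hx.symm.trans (dif_neg h))
    apply IH K⟮x⟯
    · obtain ⟨i, hi⟩ := hK
      exact ⟨algebraMap K K⟮x⟯ i, by rw [← map_mul, ← hi, map_neg, map_one]⟩
    · rintro ⟨t, ht⟩
      apply ha
      have hnorm : Algebra.norm K (AdjoinSimple.gen K x) = -a := by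
        rw [← adjoin.powerBasis_gen hint,
          Algebra.PowerBasis.norm_gen_eq_coeff_zero_minpoly]
        simp [minpoly_gen, hx]
      rw [ht, map_mul] at hnorm
      obtain ⟨i, hi⟩ := hK
      exact ⟨i * Algebra.norm K t,
        by linear_combination (Algebra.norm K t * Algebra.norm K t) * hi + hnorm⟩

theorem lemB {K : Type u} [Field K] (hK : IsSquare (-1 : K)) {A b : K} (hA : A ≠ 0)
    (hAb : ¬ IsSquare (A * b)) (n : ℕ) :
    Irreducible (C A * (X - C b) ^ (2 ^ n) + C b) := by
  set c : K := -b / A with hc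
  have hcsq : ¬ IsSquare c := by
    rintro ⟨t, ht⟩
    obtain ⟨i, hi⟩ := hK
    refine hAb ⟨i * t * A, ?_⟩
    rw [hc, div_eq_iff hA] at ht
    linear_combination (-A) * ht + (t * t * A * A) * hi
  have h1 : Irreducible ((X ^ (2 ^ n) - C c).comp (X - C b)) :=
    irred_comp_linear (two_pow_irred K hK hcsq) b
  have heq : C A * (X - C b) ^ (2 ^ n) + C b = C A * ((X ^ (2 ^ n) - C c).comp (X - C b)) := by
    rw [sub_comp, pow_comp, X_comp, C_comp, mul_sub, ← C_mul]
    have h2 : A * c = -b := by rw [hc]; field_simp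
    rw [h2]
    simp [sub_neg_eq_add]
  rw [heq]
  exact (Associated.irreducible ⟨(Units.map C.toMonoidHom) (Units.mk0 A hA), mul_comm _ _⟩ h1)

lemma card_nonsquares {F : Type*} [Field F] [Fintype F] [DecidableEq F]
    (hchar : ringChar F ≠ 2) :
    (Finset.univ.filter (fun x : F => ¬ IsSquare x)).card = (Fintype.card F - 1) / 2 := by
  obtain ⟨u, hu⟩ := FiniteField.exists_nonsquare hchar
  set m := Fintype.card F / 2 with hm
  have key : ∀ x : F, ¬ IsSquare x → x ≠ 0 ∧ x ^ m = -1 := by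
    intro x hx
    have hx0 : x ≠ 0 := fun h => hx ⟨0, by simp [h]⟩
    refine ⟨hx0, (FiniteField.pow_dichotomy hchar hx0).resolve_left ?_⟩
    rw [← FiniteField.isSquare_iff hchar hx0]
    exact hx
  set NS := Finset.univ.filter (fun x : F => ¬ IsSquare x) with hNS
  set S0 := Finset.univ.filter (fun x : F => x ≠ 0 ∧ IsSquare x) with hS0
  have hcard : NS.card = S0.card := by
    apply Finset.card_nbij' (fun y => u⁻¹ * y) (fun x => u * x)
    · intro y hy
      simp only [hNS, Finset.mem_coe, Finset.mem_filter, Finset.mem_univ, true_and] at hy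
      obtain ⟨hy0, hym⟩ := key y hy
      obtain ⟨hu0, hum⟩ := key u hu
      simp only [hS0, Finset.mem_coe, Finset.mem_filter, Finset.mem_univ, true_and]
      have hne : u⁻¹ * y ≠ 0 := mul_ne_zero (inv_ne_zero hu0) hy0
      refine ⟨hne, ?_⟩
      rw [FiniteField.isSquare_iff hchar hne]
      rw [mul_pow, hym, inv_pow, hum]
      norm_num
    · intro x hx
      simp only [hS0, Finset.mem_coe, Finset.mem_filter, Finset.mem_univ, true_and] at hx
      obtain ⟨hx0, s, hs⟩ := hx
      simp only [hNS, Finset.mem_coe, Finset.mem_filter, Finset.mem_univ, true_and]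
      rintro ⟨t, ht⟩
      have hs0 : s ≠ 0 := fun h => hx0 (by simp [hs, h])
      exact hu ⟨t / s, by field_simp; linear_combination ht - u * hs⟩
    · intro y hy
      have hu0 : u ≠ 0 := (key u hu).1
      field_simp
    · intro x hx
      have hu0 : u ≠ 0 := (key u hu).1
      field_simp
  have hunion : NS.card + S0.card = Fintype.card F - 1 := by
    rw [← Finset.card_union_of_disjoint]
    · have : NS ∪ S0 = Finset.univ.filter (fun x : F => x ≠ 0) := by
        ext x
        simp only [hNS, hS0, Finset.mem_union, Finset.mem_filter, Finset.mem_univ, true_and]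
        constructor
        · rintro (h | h)
          · exact (key x h).1
          · exact h.1
        · intro h
          by_cases hsq : IsSquare x
          · exact Or.inr ⟨h, hsq⟩
          · exact Or.inl hsq
      rw [this, Finset.filter_ne', Finset.card_erase_of_mem (Finset.mem_univ 0),
        Finset.card_univ]
    · rw [Finset.disjoint_left]
      intro x hx hx'
      simp only [hNS, Finset.mem_filter] at hx
      simp only [hS0, Finset.mem_filter] at hx'
      exact hx.2 hx'.2.2
  omega

/-- If `-1` is a square in `F_q` and `b ≠ 0`, then the family
`{f_a = a(X-b)² + b : ab a non-square}` has `(q-1)/2` members and is dynamically irreducible. -/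
theorem stmt_7 (F : Type*) [Field F] [Fintype F] (hodd : Odd (Fintype.card F))
    (hneg : IsSquare (-1 : F)) (b : F) (hb : b ≠ 0) :
    ({p : F[X] | ∃ a : F, a ≠ 0 ∧ ¬ IsSquare (a * b) ∧
        p = C a * (X - C b) ^ 2 + C b}).ncard = (Fintype.card F - 1) / 2 ∧
    ∀ l : List F[X], l ≠ [] →
      (∀ p ∈ l, ∃ a : F, a ≠ 0 ∧ ¬ IsSquare (a * b) ∧ p = C a * (X - C b) ^ 2 + C b) →
      Irreducible (l.foldr (·.comp ·) X) := by
  classical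
  have hchar : ringChar F ≠ 2 := by
    intro h
    have := FiniteField.even_card_of_char_two (F := F) h
    rw [Nat.odd_iff] at hodd
    omega
  constructor
  · -- cardinality
    set φ : F → F[X] := fun a => C a * (X - C b) ^ 2 + C b with hφ
    set T : Set F := {a | a ≠ 0 ∧ ¬ IsSquare (a * b)} with hT
    have hSet : {p : F[X] | ∃ a : F, a ≠ 0 ∧ ¬ IsSquare (a * b) ∧
        p = C a * (X - C b) ^ 2 + C b} = φ '' T := by
      ext p
      simp only [Set.mem_setOf_eq, Set.mem_image, hT, hφ]
      constructor
      · rintro ⟨a, h1, h2, h3⟩; exact ⟨a, ⟨h1, h2⟩, h3.symm⟩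
      · rintro ⟨a, ⟨h1, h2⟩, h3⟩; exact ⟨a, h1, h2, h3.symm⟩
    have hinj : Set.InjOn φ T := by
      intro a1 _ a2 _ h
      simp only [hφ] at h
      have h' : C a1 * (X - C b) ^ 2 = C a2 * (X - C b) ^ 2 := by
        exact add_right_cancel h
      have := mul_right_cancel₀ (pow_ne_zero 2 (X_sub_C_ne_zero b)) h'
      exact C_injective this
    rw [hSet, Set.ncard_image_of_injOn hinj]
    have hT2 : T = (fun x : F => x * b⁻¹) '' {x : F | ¬ IsSquare x} := by
      ext a
      simp only [hT, Set.mem_setOf_eq, Set.mem_image]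
      constructor
      · rintro ⟨h1, h2⟩
        exact ⟨a * b, h2, by field_simp⟩
      · rintro ⟨x, hx, rfl⟩
        have hx0 : x ≠ 0 := fun h => hx ⟨0, by simp [h]⟩
        refine ⟨mul_ne_zero hx0 (inv_ne_zero hb), ?_⟩
        have : x * b⁻¹ * b = x := by field_simp
        rw [this]
        exact hx
    rw [hT2, Set.ncard_image_of_injOn
      (Set.injOn_of_injective (fun x y h => by field_simp at h; exact h))]
    have : {x : F | ¬ IsSquare x}.ncard
        = (Finset.univ.filter (fun x : F => ¬ IsSquare x)).card := by
      rw [Set.ncard_eq_toFinset_card']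
      congr 1
      ext x
      simp
    rw [this, card_nonsquares hchar]
  · -- dynamical irreducibility
    intro l hl hprop
    have key : ∀ l : List F[X], l ≠ [] →
        (∀ p ∈ l, ∃ a : F, a ≠ 0 ∧ ¬ IsSquare (a * b) ∧ p = C a * (X - C b) ^ 2 + C b) →
        ∃ a s : F, s ≠ 0 ∧ a ≠ 0 ∧ ¬ IsSquare (a * b) ∧
          l.foldr (·.comp ·) X = C (a * s ^ 2) * (X - C b) ^ (2 ^ l.length) + C b := by
      intro l
      induction l with
      | nil => intro h; exact absurd rfl h
      | cons p l IH =>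
        intro _ hmem
        obtain ⟨a, ha, hab, hp⟩ := hmem p List.mem_cons_self
        rcases eq_or_ne l [] with rfl | hl0
        · refine ⟨a, 1, one_ne_zero, ha, hab, ?_⟩
          simp [hp]
        · obtain ⟨a', s', hs', ha', hab', hfold⟩ := IH hl0
            (fun q hq => hmem q (List.mem_cons_of_mem p hq))
          refine ⟨a, a' * s' ^ 2, by simp [ha', hs'], ha, hab, ?_⟩
          have : (p :: l).foldr (·.comp ·) X = p.comp (l.foldr (·.comp ·) X) := rfl
          rw [this, hfold, hp]
          simp only [add_comp, mul_comp, pow_comp, sub_comp, X_comp, C_comp]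
          rw [List.length_cons, pow_succ (2 : ℕ), pow_mul]
          simp only [C_mul, C_pow]
          ring
    obtain ⟨a, s, hs, ha, hab, hfold⟩ := key l hl hprop
    rw [hfold]
    apply lemB hneg (A := a * s ^ 2) (by simp [ha, hs])
    intro hsq
    apply hab
    apply sq_mul_isSquare hs
    have : a * s ^ 2 * b = a * b * s ^ 2 := by ring
    rw [this] at hsq
    exact hsq
end
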